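/- Let S be a semitransitive but not transitive subsemigroup of IS_n. Then S contains a nonzero nilpotent element, i.e., a nonzero partial bijection φ ∈ S such that some power φ^m is the empty partial bijection. -/

import Mathlib

def IsSubsemigroup {X : Type*} (S : Set (X ≃. X)) : Prop :=
  ∀ f ∈ S, ∀ g ∈ S, f.trans g ∈ S

def IsTransitiveSet {X : Type*} (S : Set (X ≃. X)) : Prop :=
  ∀ x y : X, ∃ f ∈ S, f x = some y

def IsSemitransitiveSet {X : Type*} (S : Set (X ≃. X)) : Prop :=
  ∀ x y : X, ∃ f ∈ S, f x = some y ∨ f y = some x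

def ppow {X : Type*} (f : X ≃. X) : ℕ → (X ≃. X)
  | 0 => PEquiv.refl X
  | n + 1 => (ppow f n).trans f

namespace STnil

set_option linter.unusedSectionVars false

variable {X : Type*} [Fintype X]

/-- Reachability: some element of `S` maps `x` to `y`. -/
def reach (S : Set (X ≃. X)) (x y : X) : Prop := ∃ f ∈ S, f x = some y

/-- The set of cyclic points of `f`. -/
def cyc (f : X ≃. X) : Set X := {c | ∃ k, 1 ≤ k ∧ ppow f k c = some c}

lemma trans_apply' (f g : X ≃. X) (a : X) : (f.trans g) a = (f a).bind g := rfl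

lemma ppow_one (f : X ≃. X) : ppow f 1 = f := by
  show (PEquiv.refl X).trans f = f
  exact PEquiv.refl_trans f

lemma ppow_add (f : X ≃. X) (m k : ℕ) :
    ppow f (m + k) = (ppow f m).trans (ppow f k) := by
  induction k with
  | zero => simp [ppow, PEquiv.trans_refl]
  | succ k ih =>
    show (ppow f (m+k)).trans f = _
    rw [ih, PEquiv.trans_assoc]
    rfl

lemma ppow_apply_add (f : X ≃. X) (m k : ℕ) (x : X) :
    ppow f (m + k) x = (ppow f m x).bind (ppow f k) := by
  rw [ppow_add]; rfl

lemma pequiv_inj {f : X ≃. X} {x y z : X} (hx : f x = some z) (hy : f y = some z) :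
    x = y := by
  rw [← f.eq_some_iff] at hx hy
  rw [← Option.some_inj, ← hx, ← hy]

lemma ppow_mem {S : Set (X ≃. X)} (hS : IsSubsemigroup S) {f : X ≃. X} (hf : f ∈ S)
    {k : ℕ} (hk : 1 ≤ k) : ppow f k ∈ S := by
  induction k with
  | zero => omega
  | succ k ih =>
    rcases Nat.eq_or_lt_of_le hk with h | h
    · rw [← h, ppow_one]; exact hf
    · exact hS _ (ih (by omega)) _ hf

lemma reach_refl {S : Set (X ≃. X)} (hsemi : IsSemitransitiveSet S) (x : X) :
    reach S x x := by
  obtain ⟨f, hf, h⟩ := hsemi x x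
  exact ⟨f, hf, h.elim id id⟩

lemma reach_trans {S : Set (X ≃. X)} (hS : IsSubsemigroup S) {x y z : X}
    (h1 : reach S x y) (h2 : reach S y z) : reach S x z := by
  obtain ⟨f, hf, h1⟩ := h1
  obtain ⟨g, hg, h2⟩ := h2
  exact ⟨f.trans g, hS f hf g hg, by rw [trans_apply', h1]; exact h2⟩

/-- prefix-definedness / splitting -/
lemma ppow_split {f : X ≃. X} {m k : ℕ} {x z : X} (h : ppow f (m + k) x = some z) :
    ∃ w, ppow f m x = some w ∧ ppow f k w = some z := by
  rw [ppow_apply_add, Option.bind_eq_some_iff] at h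
  exact h

/-- a predecessor of a cyclic point is cyclic -/
lemma cyc_pred {f : X ≃. X} {u w : X} (hw : w ∈ cyc f) (hu : f u = some w) :
    u ∈ cyc f := by
  obtain ⟨k, hk1, hkw⟩ := hw
  have hsplit : ppow f ((k-1) + 1) w = some w := by rwa [Nat.sub_add_cancel hk1]
  obtain ⟨v, hv, hvw⟩ := ppow_split hsplit
  rw [ppow_one] at hvw
  have huv : u = v := pequiv_inj hu hvw
  refine ⟨1 + (k-1), by omega, ?_⟩
  rw [ppow_apply_add, ppow_one, hu]
  simpa [← huv] using hv

lemma cyc_back {f : X ≃. X} : ∀ (i : ℕ) {x w : X}, ppow f i x = some w → w ∈ cyc f →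
    x ∈ cyc f := by
  intro i
  induction i with
  | zero => intro x w h hw; simp [ppow] at h; rwa [h]
  | succ i ih =>
    intro x w h hw
    obtain ⟨u, hu, huw⟩ := ppow_split (m := i) (k := 1) (by rwa [show i + 1 = i + 1 from rfl])
    rw [ppow_one] at huw
    exact ih hu (cyc_pred hw huw)

/-- pigeonhole along an orbit -/
lemma orbit_repeat {f : X ≃. X} {K : ℕ} {x z : X} (hK : Fintype.card X ≤ K)
    (h : ppow f K x = some z) :
    ∃ i j w, i < j ∧ j ≤ Fintype.card X ∧ ppow f i x = some w ∧ ppow f j x = some w := by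
  set n := Fintype.card X with hn
  have hdef : ∀ i : Fin (n + 1), ∃ w, ppow f i x = some w := by
    intro i
    have : ppow f (↑i + (K - ↑i)) x = some z := by
      rw [Nat.add_sub_cancel' (by omega : (i : ℕ) ≤ K)]; exact h
    obtain ⟨w, hw, -⟩ := ppow_split this
    exact ⟨w, hw⟩
  choose g hg using hdef
  obtain ⟨i, j, hij, hgij⟩ := Fintype.exists_ne_map_eq_of_card_lt g (by simp [hn])
  rcases lt_or_gt_of_ne (fun h : (i : ℕ) = (j : ℕ) => hij (Fin.ext h)) with hlt | hlt
  · exact ⟨i, j, g i, hlt, by omega, hg i, by rw [hgij]; exact hg j⟩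
  · exact ⟨j, i, g j, hlt, by omega, hg j, by rw [← hgij]; exact hg i⟩

lemma dom_cyc {f : X ≃. X} {K : ℕ} {x z : X} (hK : Fintype.card X ≤ K)
    (h : ppow f K x = some z) : x ∈ cyc f := by
  obtain ⟨i, j, w, hij, hjn, hi, hj⟩ := orbit_repeat hK h
  have : ppow f (i + (j - i)) x = some w := by rwa [Nat.add_sub_cancel' (by omega : i ≤ j)]
  obtain ⟨w', hw', hww⟩ := ppow_split this
  rw [hi] at hw'
  have hw' : w' = w := by injection hw'.symm
  subst hw'
  exact cyc_back i hi ⟨j - i, by omega, hww⟩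

lemma cyc_mul {f : X ≃. X} {p : ℕ} {c : X} (h : ppow f p c = some c) (m : ℕ) :
    ppow f (p * m) c = some c := by
  induction m with
  | zero => simp [ppow]
  | succ m ih =>
    have : ppow f (p * m + p) c = some c := by
      rw [ppow_apply_add, ih]; exact h
    rwa [Nat.mul_succ]

/-- periods can be taken at most card X -/
lemma small_period {f : X ≃. X} {c : X} (hc : c ∈ cyc f) :
    ∃ p, 1 ≤ p ∧ p ≤ Fintype.card X ∧ ppow f p c = some c := by
  obtain ⟨k, hk1, hkc⟩ := hc
  induction k using Nat.strong_induction_on with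
  | _ k ih =>
    by_cases hkn : k ≤ Fintype.card X
    · exact ⟨k, hk1, hkn, hkc⟩
    · push_neg at hkn
      obtain ⟨i, j, w, hij, hjn, hi, hj⟩ := orbit_repeat (by omega) hkc
      -- ppow f (k - j) w = some c
      have h1 : ppow f (j + (k - j)) c = some c := by
        rwa [Nat.add_sub_cancel' (by omega : j ≤ k)]
      obtain ⟨w', hw', hwc⟩ := ppow_split h1
      rw [hj] at hw'
      have : w' = w := by injection hw'.symm
      subst this
      have h2 : ppow f (i + (k - j)) c = some c := by
        rw [ppow_apply_add, hi]; exact hwc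
      exact ih (i + (k - j)) (by omega) (by omega) h2

lemma period_factorial {f : X ≃. X} {c : X} (hc : c ∈ cyc f) :
    ppow f (Nat.factorial (Fintype.card X)) c = some c := by
  obtain ⟨p, hp1, hpn, hpc⟩ := small_period hc
  obtain ⟨m, hm⟩ := Nat.dvd_factorial (by omega) hpn
  rw [hm]
  exact cyc_mul hpc m

/-- characterization of the idempotent power -/
lemma e_char {f : X ≃. X} {x z : X}
    (h : ppow f (Nat.factorial (Fintype.card X)) x = some z) : x ∈ cyc f ∧ z = x := by
  have hx : x ∈ cyc f := dom_cyc (Nat.self_le_factorial _) h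
  have := period_factorial hx
  rw [h] at this
  exact ⟨hx, by injection this⟩

lemma nilpotent_of_cyc_empty {f : X ≃. X} (h : cyc f = ∅) :
    ppow f (Fintype.card X) = (⊥ : X ≃. X) := by
  ext x y
  simp only [PEquiv.bot_apply, Option.mem_def]
  constructor
  · intro hy
    have : x ∈ cyc f := dom_cyc le_rfl hy
    rw [h] at this
    exact this.elim
  · intro hy
    cases hy

/-- The key induction -/
lemma key {S : Set (X ≃. X)} (hS : IsSubsemigroup S) (hsemi : IsSemitransitiveSet S) :
    ∀ N : ℕ, ∀ f ∈ S, ∀ b a : X, f b = some a → ¬ reach S a b → (cyc f).ncard < N →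
    ∃ φ ∈ S, φ ≠ (⊥ : X ≃. X) ∧ ∃ m : ℕ, 1 ≤ m ∧ ppow φ m = (⊥ : X ≃. X) := by
  intro N
  induction N with
  | zero => intro f _ b a _ _ h; omega
  | succ N ih =>
    intro f hf b a hba hnr hcard
    by_cases hA : cyc f = ∅
    · refine ⟨f, hf, ?_, Fintype.card X, Fintype.card_pos_iff.mpr ⟨b⟩,
        nilpotent_of_cyc_empty hA⟩
      intro hbot
      rw [hbot] at hba
      simp [PEquiv.bot_apply] at hba
    · obtain ⟨c, hc⟩ := Set.nonempty_iff_ne_empty.mpr hA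
      -- b is not cyclic
      have hbA : b ∉ cyc f := by
        intro hb
        obtain ⟨k, hk1, hkb⟩ := hb
        have : ppow f (1 + (k-1)) b = some b := by
          rwa [show 1 + (k-1) = k by omega]
        rw [ppow_apply_add, ppow_one, hba] at this
        rcases Nat.eq_or_lt_of_le hk1 with h1 | h1
        · simp [ppow, ← h1] at this
          subst this
          exact hnr ⟨f, hf, hba⟩
        · exact hnr ⟨ppow f (k-1), ppow_mem hS hf (by omega), this⟩
      set K := Nat.factorial (Fintype.card X) with hK
      have hK1 : 1 ≤ K := Nat.factorial_pos _
      have heS : ppow f K ∈ S := ppow_mem hS hf hK1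
      by_cases hcb : reach S c b
      · -- use pair (c, a): ¬ reach a c, get h with h c = some a
        have hnac : ¬ reach S a c := fun hac => hnr (reach_trans hS hac hcb)
        obtain ⟨h, hh, hch⟩ := hsemi a c
        have hca : h c = some a := by
          rcases hch with h1 | h1
          · exact absurd ⟨h, hh, h1⟩ hnac
          · exact h1
        set φ := (ppow f K).trans h with hφ
        have hφS : φ ∈ S := hS _ heS _ hh
        have hφc : φ c = some a := by
          rw [hφ, trans_apply', period_factorial hc]; exact hca
        -- cyc φ ⊆ cyc f \ {c}
        have hsub : cyc φ ⊆ cyc f := by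
          intro z hz
          obtain ⟨k, hk1, hkz⟩ := hz
          have : ppow φ (1 + (k-1)) z = some z := by rwa [show 1+(k-1)=k by omega]
          rw [ppow_apply_add, ppow_one] at this
          rw [Option.bind_eq_some_iff] at this
          obtain ⟨u, hu, -⟩ := this
          rw [hφ, trans_apply', Option.bind_eq_some_iff] at hu
          obtain ⟨v, hv, -⟩ := hu
          exact (e_char hv).1
        have hcnot : c ∉ cyc φ := by
          intro hcφ
          obtain ⟨k, hk1, hkc⟩ := hcφ
          have : ppow φ (1 + (k-1)) c = some c := by rwa [show 1+(k-1)=k by omega]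
          rw [ppow_apply_add, ppow_one, hφc] at this
          rcases Nat.eq_or_lt_of_le hk1 with h1 | h1
          · simp [ppow, ← h1] at this
            subst this
            exact hnac ⟨h, hh, hca⟩
          · exact hnac ⟨ppow φ (k-1), ppow_mem hS hφS (by omega), this⟩
        have hssub : cyc φ ⊂ cyc f := ⟨hsub, fun hss => hcnot (hss hc)⟩
        have : (cyc φ).ncard < (cyc f).ncard :=
          Set.ncard_lt_ncard hssub (Set.toFinite _)
        exact ih φ hφS c a hφc hnac (by omega)
      · -- ¬ reach c b: get h with h b = some c
        obtain ⟨h, hh, hch⟩ := hsemi b c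
        have hbc : h b = some c := by
          rcases hch with h1 | h1
          · exact h1
          · exact absurd ⟨h, hh, h1⟩ hcb
        set φ := h.trans (ppow f K) with hφ
        have hφS : φ ∈ S := hS _ hh _ heS
        have hφb : φ b = some c := by
          rw [hφ, trans_apply', hbc]; exact period_factorial hc
        have hrange : ∀ {u z : X}, φ u = some z → z ∈ cyc f := by
          intro u z hu
          rw [hφ, trans_apply', Option.bind_eq_some_iff] at hu
          obtain ⟨v, -, hv⟩ := hu
          obtain ⟨h1, h2⟩ := e_char hv
          rw [h2]; exact h1
        have hsub : cyc φ ⊆ cyc f := by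
          intro z hz
          obtain ⟨k, hk1, hkz⟩ := hz
          have : ppow φ ((k-1) + 1) z = some z := by rwa [Nat.sub_add_cancel hk1]
          obtain ⟨w, -, hw⟩ := ppow_split this
          rw [ppow_one] at hw
          exact hrange hw
        have hcnot : c ∉ cyc φ := by
          intro hcφ
          obtain ⟨k, hk1, hkc⟩ := hcφ
          have : ppow φ ((k-1) + 1) c = some c := by rwa [Nat.sub_add_cancel hk1]
          obtain ⟨w, hw1, hw2⟩ := ppow_split this
          rw [ppow_one] at hw2
          -- w is cyclic for φ
          have hwcyc : w ∈ cyc φ := by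
            refine ⟨1 + (k-1), by omega, ?_⟩
            rw [ppow_apply_add, ppow_one, hw2]
            exact hw1
          have hwf : w ∈ cyc f := hsub hwcyc
          have : w = b := pequiv_inj hw2 hφb
          rw [this] at hwf
          exact hbA hwf
        have hssub : cyc φ ⊂ cyc f := ⟨hsub, fun hss => hcnot (hss hc)⟩
        have : (cyc φ).ncard < (cyc f).ncard :=
          Set.ncard_lt_ncard hssub (Set.toFinite _)
        exact ih φ hφS b c hφb hcb (by omega)

end STnil

/-- A semitransitive but not transitive subsemigroup of `IS_n` contains a nonzero
nilpotent element. -/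
theorem semitransitive_not_transitive_contains_nilpotent {X : Type*} [Fintype X]
    (S : Set (X ≃. X)) (hS : IsSubsemigroup S) (hsemi : IsSemitransitiveSet S)
    (htr : ¬ IsTransitiveSet S) :
    ∃ φ ∈ S, φ ≠ (⊥ : X ≃. X) ∧ ∃ m : ℕ, 1 ≤ m ∧ ppow φ m = (⊥ : X ≃. X) := by
  unfold IsTransitiveSet at htr
  push_neg at htr
  obtain ⟨x, y, hxy⟩ := htr
  have hnr : ¬ STnil.reach S x y := by
    rintro ⟨f, hf, h⟩
    exact hxy f hf h
  obtain ⟨f, hf, hcase⟩ := hsemi x y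
  have hfyx : f y = some x := by
    rcases hcase with h1 | h1
    · exact absurd h1 (hxy f hf)
    · exact h1
  exact STnil.key hS hsemi ((STnil.cyc f).ncard + 1) f hf y x hfyx hnr (by omega)
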